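/- Let K be a proper cone in a finite-dimensional inner product space, v ∈ K* \ {0} generate an exposed ray of the dual cone K*, and x ∈ ℝ₊v, x ≠ 0. Then F := K ∩ x^⊥ = {y ∈ K : ⟨x, y⟩ = 0} is a maximal face of K. -/

import Mathlib

open RealInnerProductSpace

variable {E : Type*} [NormedAddCommGroup E] [InnerProductSpace ℝ E]

/-- The dual cone of a set `K`. -/
def dualC (K : Set E) : Set E := {u | ∀ x ∈ K, 0 ≤ (inner ℝ x u : ℝ)}

/-- `F` is a face of the convex cone `K`: a nonempty convex subset of `K` such
that whenever a strict convex combination of two points of `K` lies in `F`,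
both points lie in `F`. -/
def IsFaceOf (K F : Set E) : Prop :=
  F.Nonempty ∧ F ⊆ K ∧ Convex ℝ F ∧
    ∀ x ∈ K, ∀ y ∈ K, ∀ α : ℝ, 0 < α → α < 1 →
      α • x + (1 - α) • y ∈ F → x ∈ F ∧ y ∈ F

/-- `F` is a maximal face of `K`: a proper face not strictly contained in any
other proper face. -/
def IsMaximalFaceOf (K F : Set E) : Prop :=
  IsFaceOf K F ∧ F ≠ K ∧ ∀ G, IsFaceOf K G → G ≠ K → F ⊆ G → G = F

/-- If `K` is a proper cone in a finite-dimensional real inner product space,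
`v ∈ K* \ {0}` generates an exposed ray of the dual cone `K*` and
`x ∈ ℝ₊ v`, `x ≠ 0`, then `F := K ∩ x^⊥ = {y ∈ K : ⟪x, y⟫ = 0}` is a maximal
face of `K`. -/
theorem maximal_face_from_exposed_ray [FiniteDimensional ℝ E]
    (K : Set E) (hclosed : IsClosed K) (hconv : Convex ℝ K)
    (hcone : ∀ x ∈ K, ∀ c : ℝ, 0 < c → c • x ∈ K)
    (hpointed : ∀ x ∈ K, -x ∈ K → x = 0)
    (hfull : Submodule.span ℝ K = ⊤)
    (v : E) (hv : v ∈ dualC K) (hv0 : v ≠ 0)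
    (hexp : ∃ w ∈ K, dualC K ∩ {u | (inner ℝ w u : ℝ) = 0} =
      {u | ∃ c : ℝ, 0 ≤ c ∧ u = c • v})
    (x : E) (hx : ∃ c : ℝ, 0 ≤ c ∧ x = c • v) (hx0 : x ≠ 0) :
    IsMaximalFaceOf K {y ∈ K | (inner ℝ x y : ℝ) = 0} := by
  classical
  obtain ⟨c, hc, hxc⟩ := hx
  have hcpos : 0 < c := by
    rcases hc.lt_or_eq with h | h
    · exact h
    · exact absurd (by rw [hxc, ← h, zero_smul]) hx0
  obtain ⟨w, hwK, hwexp⟩ := hexp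
  -- K is nonempty and contains 0
  have hKne : K.Nonempty := by
    rcases K.eq_empty_or_nonempty with h | h
    · exfalso
      apply hv0
      have hbot : Submodule.span ℝ K = ⊥ := by rw [h, Submodule.span_empty]
      have : v ∈ (⊥ : Submodule ℝ E) := by
        rw [← hbot, hfull]; exact Submodule.mem_top
      simpa using this
    · exact h
  obtain ⟨k₀, hk₀⟩ := hKne
  have h0K : (0 : E) ∈ K := by
    have htend : Filter.Tendsto (fun n : ℕ => (1 / (n + 1 : ℝ)) • k₀)
        Filter.atTop (nhds ((0 : ℝ) • k₀)) :=
      tendsto_one_div_add_atTop_nhds_zero_nat.smul_const k₀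
    rw [zero_smul] at htend
    refine hclosed.mem_of_tendsto htend (Filter.Eventually.of_forall fun n => ?_)
    exact hcone k₀ hk₀ _ (by positivity)
  -- nonnegativity of ⟪x, ·⟫ on K
  have hxnn : ∀ y ∈ K, 0 ≤ (inner ℝ x y : ℝ) := by
    intro y hy
    rw [hxc, real_inner_smul_left, real_inner_comm]
    exact mul_nonneg hc (hv y hy)
  set F := {y ∈ K | (inner ℝ x y : ℝ) = 0} with hF
  have hF0 : (0 : E) ∈ F := ⟨h0K, inner_zero_right x⟩
  -- F is a face of K
  have hFface : IsFaceOf K F := by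
    refine ⟨⟨0, hF0⟩, fun y hy => hy.1, ?_, ?_⟩
    · intro a ha b hb α β hα hβ hαβ
      refine ⟨hconv ha.1 hb.1 hα hβ hαβ, ?_⟩
      rw [inner_add_right, real_inner_smul_right, real_inner_smul_right, ha.2, hb.2]
      ring
    · intro a ha b hb α hα1 hα2 hmem
      have h1 : (inner ℝ x (α • a + (1 - α) • b) : ℝ) = 0 := hmem.2
      rw [inner_add_right, real_inner_smul_right, real_inner_smul_right] at h1
      have h2 := hxnn a ha
      have h3 := hxnn b hb
      have ha0 : (inner ℝ x a : ℝ) = 0 := by nlinarith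
      have hb0 : (inner ℝ x b : ℝ) = 0 := by nlinarith
      exact ⟨⟨ha, ha0⟩, ⟨hb, hb0⟩⟩
  -- F ≠ K
  have hFneK : F ≠ K := by
    intro h
    apply hx0
    have hall : ∀ y ∈ K, (inner ℝ x y : ℝ) = 0 := by
      intro y hy
      have : y ∈ F := h ▸ hy
      exact this.2
    have hspan : ∀ y ∈ Submodule.span ℝ K, (inner ℝ x y : ℝ) = 0 := by
      intro y hy
      induction hy using Submodule.span_induction with
      | mem z hz => exact hall z hz
      | zero => exact inner_zero_right x
      | add z₁ z₂ _ _ h₁ h₂ => rw [inner_add_right, h₁, h₂, add_zero]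
      | smul t z _ h₁ => rw [real_inner_smul_right, h₁, mul_zero]
    have : (inner ℝ x x : ℝ) = 0 := hspan x (by rw [hfull]; exact Submodule.mem_top)
    exact inner_self_eq_zero.mp this
  refine ⟨hFface, hFneK, ?_⟩
  -- maximality
  intro G hG hGne hFG
  obtain ⟨_, hGsub, hGconv, hGface⟩ := hG
  have hG0 : (0 : E) ∈ G := hFG hF0
  -- faces are cones
  have hGcone : ∀ y ∈ G, ∀ t : ℝ, 0 < t → t • y ∈ G := by
    intro y hy t ht
    have hyK : y ∈ K := hGsub hy
    have h1 : t • y ∈ K := hcone y hyK t ht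
    rcases lt_trichotomy t 1 with h | h | h
    · have h2 : (2 - t) • y ∈ K := hcone y hyK _ (by linarith)
      have hcomb : (1 / 2 : ℝ) • (t • y) + (1 - 1 / 2 : ℝ) • ((2 - t) • y) = y := by
        rw [smul_smul, smul_smul, ← add_smul]
        have : (1 / 2 * t + (1 - 1 / 2) * (2 - t) : ℝ) = 1 := by ring
        rw [this, one_smul]
      exact (hGface (t • y) h1 ((2 - t) • y) h2 (1 / 2) (by norm_num) (by norm_num)
        (by rw [hcomb]; exact hy)).1
    · rw [h, one_smul]; exact hy
    · have hcomb : (1 / t : ℝ) • (t • y) + (1 - 1 / t : ℝ) • (0 : E) = y := by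
        rw [smul_smul, smul_zero, add_zero, one_div_mul_cancel (by linarith), one_smul]
      exact (hGface (t • y) h1 0 h0K (1 / t)
        (by positivity) (by rw [div_lt_one (by linarith)]; linarith)
        (by rw [hcomb]; exact hy)).1
  -- G is disjoint from the interior of K
  have haff : affineSpan ℝ K = ⊤ := by
    rw [← (affineSpan ℝ K).coe_eq_univ_iff]
    have h1 := affineSpan_insert_zero (k := ℝ) K
    rw [Set.insert_eq_of_mem h0K, hfull] at h1
    rw [h1]; rfl
  have hint : (interior K).Nonempty :=
    hconv.interior_nonempty_iff_affineSpan_eq_top.mpr haff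
  have hdisj : Disjoint (interior K) G := by
    rw [Set.disjoint_left]
    intro p hpint hpG
    apply hGne
    refine Set.Subset.antisymm hGsub fun z hz => ?_
    by_cases hzp : z = p
    · rwa [hzp]
    obtain ⟨δ, hδ, hball⟩ := Metric.mem_nhds_iff.mp (mem_interior_iff_mem_nhds.mp hpint)
    have hnorm : 0 < ‖p - z‖ := norm_sub_pos_iff.mpr (Ne.symm hzp)
    set ε : ℝ := δ / (2 * ‖p - z‖) with hε_def
    have hε : 0 < ε := by positivity
    have hq : p + ε • (p - z) ∈ K := by
      apply hball
      rw [Metric.mem_ball, dist_eq_norm]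
      have : p + ε • (p - z) - p = ε • (p - z) := by abel
      rw [this, norm_smul, Real.norm_eq_abs, abs_of_pos hε]
      have heq : ε * ‖p - z‖ = δ / 2 := by
        rw [hε_def]; field_simp [hnorm.ne']
      rw [heq]; linarith
    have h1ε : (0 : ℝ) < 1 + ε := by linarith
    have hcomb : (ε / (1 + ε)) • z + (1 - ε / (1 + ε)) • (p + ε • (p - z)) = p := by
      match_scalars <;> (field_simp; try ring)
    exact (hGface z hz (p + ε • (p - z)) hq (ε / (1 + ε))
      (by positivity) (by rw [div_lt_one h1ε]; linarith)
      (by rw [hcomb]; exact hpG)).1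
  -- separate
  obtain ⟨f, r, hf1, hf2⟩ :=
    geometric_hahn_banach_open hconv.interior isOpen_interior hGconv hdisj
  have hr0 : r ≤ 0 := by simpa using hf2 0 hG0
  -- f vanishes on G
  have hGzero : ∀ y ∈ G, f y = 0 := by
    intro y hy
    have hyK : y ∈ K := hGsub hy
    have hge : 0 ≤ f y := by
      by_contra h
      push_neg at h
      have ht : 0 < (r - 1) / f y := div_pos_of_neg_of_neg (by linarith) h
      have := hf2 _ (hGcone y hy _ ht)
      rw [map_smul, smul_eq_mul, div_mul_cancel₀ _ (ne_of_lt h)] at this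
      linarith
    have hle : f y ≤ 0 := by
      by_contra h
      push_neg at h
      obtain ⟨p, hp⟩ := hint
      have hfp : f p < 0 := lt_of_lt_of_le (hf1 p hp) hr0
      have hfyp : 0 < f y - f p := by linarith
      set a : ℝ := f y / (2 * (f y - f p)) with ha_def
      have ha0 : 0 < a := by positivity
      have ha1 : a ≤ 1 / 2 := by
        rw [ha_def, div_le_div_iff₀ (by positivity) (by norm_num)]
        nlinarith
      have hmem : a • p + (1 - a) • y ∈ interior K :=
        hconv.combo_interior_closure_mem_interior hp (subset_closure hyK) ha0 (by linarith) (by ring)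
      have := hf1 _ hmem
      rw [map_add, map_smul, map_smul, smul_eq_mul, smul_eq_mul] at this
      have hval : a * f p + (1 - a) * f y = f y / 2 := by
        rw [ha_def]; field_simp; ring
      rw [hval] at this
      linarith
    linarith
  -- turn f into an element of the dual cone
  set u₀ : E := (InnerProductSpace.toDual ℝ E).symm f with hu₀
  have hu₀app : ∀ z : E, (inner ℝ u₀ z : ℝ) = f z := fun z =>
    InnerProductSpace.toDual_symm_apply
  have hfK : ∀ z ∈ K, f z ≤ 0 := by
    intro z hz
    obtain ⟨p, hp⟩ := hint
    have hfp : f p < 0 := lt_of_lt_of_le (hf1 p hp) hr0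
    by_contra h
    push_neg at h
    have hfzp : 0 < f z - f p := by linarith
    set a : ℝ := f z / (2 * (f z - f p)) with ha_def
    have ha0 : 0 < a := by positivity
    have ha1 : a ≤ 1 / 2 := by
      rw [ha_def, div_le_div_iff₀ (by positivity) (by norm_num)]
      nlinarith
    have hmem : a • p + (1 - a) • z ∈ interior K :=
      hconv.combo_interior_closure_mem_interior hp (subset_closure hz) ha0 (by linarith) (by ring)
    have := hf1 _ hmem
    rw [map_add, map_smul, map_smul, smul_eq_mul, smul_eq_mul] at this
    have hval : a * f p + (1 - a) * f z = f z / 2 := by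
      rw [ha_def]; field_simp; ring
    rw [hval] at this
    linarith
  have hudual : -u₀ ∈ dualC K := by
    intro z hz
    rw [inner_neg_right, real_inner_comm, hu₀app]
    linarith [hfK z hz]
  -- w belongs to F, hence to G, hence f w = 0
  have hvw : (inner ℝ w v : ℝ) = 0 := by
    have hvmem : v ∈ dualC K ∩ {u | (inner ℝ w u : ℝ) = 0} := by
      rw [hwexp]
      exact ⟨1, zero_le_one, (one_smul ℝ v).symm⟩
    exact hvmem.2
  have hwF : w ∈ F := by
    refine ⟨hwK, ?_⟩
    rw [hxc, real_inner_smul_left, real_inner_comm, hvw, mul_zero]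
  have hfw : f w = 0 := hGzero w (hFG hwF)
  -- -u₀ lies on the exposed ray
  have humem : -u₀ ∈ dualC K ∩ {u | (inner ℝ w u : ℝ) = 0} := by
    refine ⟨hudual, ?_⟩
    show (inner ℝ w (-u₀) : ℝ) = 0
    rw [inner_neg_right, real_inner_comm, hu₀app, hfw, neg_zero]
  rw [hwexp] at humem
  obtain ⟨d, hd, hdu⟩ := humem
  have hdpos : 0 < d := by
    rcases hd.lt_or_eq with h | h
    · exact h
    · exfalso
      obtain ⟨p, hp⟩ := hint
      have hfp : f p < 0 := lt_of_lt_of_le (hf1 p hp) hr0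
      have : (inner ℝ (-u₀) p : ℝ) = 0 := by
        rw [hdu, ← h, zero_smul, inner_zero_left]
      rw [inner_neg_left, hu₀app] at this
      linarith
  -- conclude G ⊆ F
  refine Set.Subset.antisymm (fun y hy => ?_) hFG
  have hyK : y ∈ K := hGsub hy
  have hfy : f y = 0 := hGzero y hy
  have hvy : (inner ℝ v y : ℝ) = 0 := by
    have h1 : (inner ℝ (-u₀) y : ℝ) = 0 := by
      rw [inner_neg_left, hu₀app, hfy, neg_zero]
    rw [hdu, real_inner_smul_left] at h1
    exact (mul_eq_zero.mp h1).resolve_left (ne_of_gt hdpos)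
  exact ⟨hyK, by rw [hxc, real_inner_smul_left, hvy, mul_zero]⟩
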